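/- Let Q be symmetric positive definite with identity diagonal blocks (K blocks), V(m) = (1/2)mᵀQm, and let m₀ be an eigenvector of Q corresponding to λ_min(Q). Then for the random-scan coordinate minimization, E[V(m_s)] ≥ (1 − λ_min(Q)/K)^{2s} V(m₀) for all s ≥ 0. -/

import Mathlib

open Matrix

/-- The quadratic objective `V(m) = (1/2) mᵀ Q m`. -/
noncomputable def quadV {K : ℕ} {m : Fin K → ℕ}
    (Q : Matrix ((k : Fin K) × Fin (m k)) ((k : Fin K) × Fin (m k)) ℝ)
    (v : (k : Fin K) × Fin (m k) → ℝ) : ℝ :=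
  (1 / 2) * (v ⬝ᵥ Q *ᵥ v)

/-- The coordinate minimization of `V` over block `k` (other blocks fixed), which for
identity diagonal blocks replaces `m_k` by `m_k - (Qm)_k`. -/
noncomputable def blockUpdate {K : ℕ} {m : Fin K → ℕ}
    (Q : Matrix ((k : Fin K) × Fin (m k)) ((k : Fin K) × Fin (m k)) ℝ)
    (k : Fin K) (v : (k : Fin K) × Fin (m k) → ℝ) : (k : Fin K) × Fin (m k) → ℝ :=
  fun i => if i.1 = k then v i - (Q *ᵥ v) i else v i

section Aux

variable {ι n : Type*} [Fintype n]

/-- dotProduct of a sum on the left. -/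
lemma aux_sum_dotProduct (s : Finset ι) (f : ι → n → ℝ) (w : n → ℝ) :
    (∑ i ∈ s, f i) ⬝ᵥ w = ∑ i ∈ s, f i ⬝ᵥ w := by
  simp only [dotProduct, Finset.sum_apply, Finset.sum_mul]
  exact Finset.sum_comm

/-- dotProduct of a sum on the right. -/
lemma aux_dotProduct_sum (s : Finset ι) (w : n → ℝ) (f : ι → n → ℝ) :
    w ⬝ᵥ (∑ i ∈ s, f i) = ∑ i ∈ s, w ⬝ᵥ f i := by
  simp only [dotProduct, Finset.sum_apply, Finset.mul_sum]
  exact Finset.sum_comm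

/-- mulVec of a sum. -/
lemma aux_mulVec_sum (Q : Matrix n n ℝ) (s : Finset ι) (f : ι → n → ℝ) :
    Q *ᵥ (∑ i ∈ s, f i) = ∑ i ∈ s, Q *ᵥ f i := by
  simpa only [Matrix.mulVecLin_apply] using map_sum Q.mulVecLin f s

/-- Jensen's inequality for a positive semidefinite quadratic form. -/
lemma aux_jensen [Fintype ι] (Q : Matrix n n ℝ) (hQ : Q.PosSemidef) (x : ι → n → ℝ) :
    (∑ i : ι, x i) ⬝ᵥ Q *ᵥ (∑ i : ι, x i)
      ≤ (Fintype.card ι : ℝ) * ∑ i : ι, x i ⬝ᵥ Q *ᵥ x i := by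
  set S : n → ℝ := ∑ i : ι, x i with hS
  set N : ℝ := (Fintype.card ι : ℝ) with hN
  have h0 : 0 ≤ ∑ i : ι, (N • x i - S) ⬝ᵥ Q *ᵥ (N • x i - S) :=
    Finset.sum_nonneg fun i _ => by simpa using hQ.dotProduct_mulVec_nonneg (N • x i - S)
  have expand : ∀ i : ι, (N • x i - S) ⬝ᵥ Q *ᵥ (N • x i - S)
      = N * N * (x i ⬝ᵥ Q *ᵥ x i) - N * (x i ⬝ᵥ Q *ᵥ S) - N * (S ⬝ᵥ Q *ᵥ x i)
        + S ⬝ᵥ Q *ᵥ S := by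
    intro i
    simp only [Matrix.mulVec_sub, Matrix.mulVec_smul, sub_dotProduct,
      dotProduct_sub, smul_dotProduct, dotProduct_smul,
      smul_eq_mul]
    ring
  rw [Finset.sum_congr rfl fun i _ => expand i] at h0
  have h1 : ∑ i : ι, (x i ⬝ᵥ Q *ᵥ S) = S ⬝ᵥ Q *ᵥ S := by
    rw [hS, aux_sum_dotProduct]
  have h2 : ∑ i : ι, (S ⬝ᵥ Q *ᵥ x i) = S ⬝ᵥ Q *ᵥ S := by
    rw [hS, aux_mulVec_sum, aux_dotProduct_sum]
  have h3 : ∑ i : ι, (N * N * (x i ⬝ᵥ Q *ᵥ x i) - N * (x i ⬝ᵥ Q *ᵥ S)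
      - N * (S ⬝ᵥ Q *ᵥ x i) + S ⬝ᵥ Q *ᵥ S)
      = N * N * (∑ i : ι, x i ⬝ᵥ Q *ᵥ x i) - N * (S ⬝ᵥ Q *ᵥ S)
        - N * (S ⬝ᵥ Q *ᵥ S) + N * (S ⬝ᵥ Q *ᵥ S) := by
    rw [Finset.sum_add_distrib, Finset.sum_sub_distrib, Finset.sum_sub_distrib,
      ← Finset.mul_sum, ← Finset.mul_sum, ← Finset.mul_sum, h1, h2,
      Finset.sum_const, Finset.card_univ, nsmul_eq_mul, hN]
  rw [h3] at h0
  have hN0 : (0 : ℝ) ≤ N := by positivity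
  rcases eq_or_lt_of_le hN0 with h | h
  · have hc : (Fintype.card ι : ℝ) = 0 := by rw [← hN]; exact h.symm
    have hcard : Fintype.card ι = 0 := by exact_mod_cast hc
    have hempty : IsEmpty ι := Fintype.card_eq_zero_iff.mp hcard
    rw [hS, Finset.univ_eq_empty, Finset.sum_empty]
    simp
  · nlinarith [h0]

end Aux

/-- Sum of block updates over all blocks. -/
lemma aux_sum_blockUpdate {K : ℕ} {d : Fin K → ℕ}
    (Q : Matrix ((k : Fin K) × Fin (d k)) ((k : Fin K) × Fin (d k)) ℝ)
    (v : (k : Fin K) × Fin (d k) → ℝ) :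
    ∑ k : Fin K, blockUpdate Q k v = (K : ℝ) • v - Q *ᵥ v := by
  funext i
  have h : ∀ k : Fin K, blockUpdate Q k v i
      = v i - (if i.1 = k then (Q *ᵥ v) i else 0) := by
    intro k; simp only [blockUpdate]; split_ifs <;> ring
  simp only [Finset.sum_apply, h, Finset.sum_sub_distrib, Finset.sum_const,
    Finset.card_univ, Fintype.card_fin, nsmul_eq_mul,
    Finset.sum_ite_eq Finset.univ i.1 (fun _ => (Q *ᵥ v) i), Finset.mem_univ,
    if_true, Pi.sub_apply, Pi.smul_apply, smul_eq_mul]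

/-- Key sum formula: summing the folded updates over all block sequences. -/
lemma aux_sum_fold {K : ℕ} {d : Fin K → ℕ}
    (Q : Matrix ((k : Fin K) × Fin (d k)) ((k : Fin K) × Fin (d k)) ℝ)
    (m₀ : (k : Fin K) × Fin (d k) → ℝ)
    (lam : ℝ) (heig : Q *ᵥ m₀ = lam • m₀) :
    ∀ s : ℕ,
      ∑ ks : Fin s → Fin K,
          (List.ofFn ks).foldl (fun v k => blockUpdate Q k v) m₀
        = ((K : ℝ) - lam) ^ s • m₀ := by
  intro s
  induction s with
  | zero =>
    rw [Fintype.sum_unique]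
    simp
  | succ s ih =>
    rw [← (Fin.snocEquiv (fun _ => Fin K)).sum_comp
      (fun ks : Fin (s + 1) → Fin K =>
        (List.ofFn ks).foldl (fun v k => blockUpdate Q k v) m₀)]
    have hsnoc : ∀ (p : Fin K × (Fin s → Fin K)),
        (List.ofFn ((Fin.snocEquiv (fun _ => Fin K)) p)).foldl
            (fun v k => blockUpdate Q k v) m₀
          = blockUpdate Q p.1
              ((List.ofFn p.2).foldl (fun v k => blockUpdate Q k v) m₀) := by
      rintro ⟨k, g⟩
      rw [List.ofFn_succ']
      simp only [Fin.snocEquiv_apply, Fin.snoc_castSucc, Fin.snoc_last,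
        List.concat_eq_append, List.foldl_append, List.foldl_cons, List.foldl_nil]
    rw [Finset.sum_congr rfl fun p _ => hsnoc p]
    calc ∑ p : Fin K × (Fin s → Fin K),
          blockUpdate Q p.1 ((List.ofFn p.2).foldl (fun v k => blockUpdate Q k v) m₀)
        = ∑ g : Fin s → Fin K, ∑ k : Fin K,
            blockUpdate Q k ((List.ofFn g).foldl (fun v k => blockUpdate Q k v) m₀) := by
          rw [Fintype.sum_prod_type_right]
      _ = ∑ g : Fin s → Fin K,
            ((K : ℝ) • ((List.ofFn g).foldl (fun v k => blockUpdate Q k v) m₀)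
              - Q *ᵥ ((List.ofFn g).foldl (fun v k => blockUpdate Q k v) m₀)) :=
          Finset.sum_congr rfl fun g _ => aux_sum_blockUpdate Q _
      _ = ((K : ℝ) - lam) ^ (s + 1) • m₀ := by
          rw [Finset.sum_sub_distrib, ← Finset.smul_sum, ← aux_mulVec_sum, ih,
            Matrix.mulVec_smul, heig, smul_smul, smul_smul, ← sub_smul, pow_succ]
          ring_nf

/-- Let `Q` be symmetric positive definite with `K` identity diagonal
blocks, `V(m) = (1/2)mᵀQm`, and let `m₀` be an eigenvector of `Q` corresponding to
`λ_min(Q)`. Then for the random-scan coordinate minimization (the expectation being the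
uniform average over all sequences of `s` block choices),
`E[V(m_s)] ≥ (1 - λ_min(Q)/K)^{2s} V(m₀)` for all `s ≥ 0`. -/
theorem stmt11 {K : ℕ} (hK : 0 < K) {d : Fin K → ℕ}
    (Q : Matrix ((k : Fin K) × Fin (d k)) ((k : Fin K) × Fin (d k)) ℝ)
    (hQ : Q.PosDef)
    (hdiag : ∀ i j : (k : Fin K) × Fin (d k), i.1 = j.1 → Q i j = if i = j then 1 else 0)
    (m₀ : (k : Fin K) × Fin (d k) → ℝ) (hm₀ : m₀ ≠ 0)
    (heig : Q *ᵥ m₀ = sInf (spectrum ℝ Q) • m₀) :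
    ∀ s : ℕ,
      ((K : ℝ) ^ s)⁻¹ *
          ∑ ks : Fin s → Fin K,
            quadV Q ((List.ofFn ks).foldl (fun v k => blockUpdate Q k v) m₀)
        ≥ (1 - sInf (spectrum ℝ Q) / K) ^ (2 * s) * quadV Q m₀ := by
  intro s
  set lam : ℝ := sInf (spectrum ℝ Q) with hlam
  set F : (Fin s → Fin K) → ((k : Fin K) × Fin (d k) → ℝ) :=
    fun ks => (List.ofFn ks).foldl (fun v k => blockUpdate Q k v) m₀ with hF
  have hKR : (0 : ℝ) < (K : ℝ) := by exact_mod_cast hK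
  have hn : (0 : ℝ) < (K : ℝ) ^ s := by positivity
  have hS : ∑ ks : Fin s → Fin K, F ks = ((K : ℝ) - lam) ^ s • m₀ :=
    aux_sum_fold Q m₀ lam heig s
  have hcard : (Fintype.card (Fin s → Fin K) : ℝ) = (K : ℝ) ^ s := by
    rw [Fintype.card_fun]; push_cast [Fintype.card_fin]; ring
  have hJ := aux_jensen Q hQ.posSemidef F
  rw [hS, hcard] at hJ
  have hBS : (((K : ℝ) - lam) ^ s • m₀) ⬝ᵥ Q *ᵥ (((K : ℝ) - lam) ^ s • m₀)
      = ((K : ℝ) - lam) ^ s * ((K : ℝ) - lam) ^ s * (m₀ ⬝ᵥ Q *ᵥ m₀) := by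
    rw [Matrix.mulVec_smul, smul_dotProduct, dotProduct_smul,
      smul_eq_mul, smul_eq_mul]
    ring
  rw [hBS] at hJ
  -- rewrite the goal
  have hpow : (1 - lam / K) ^ (2 * s)
      = ((K : ℝ) - lam) ^ s * ((K : ℝ) - lam) ^ s / ((K : ℝ) ^ s * (K : ℝ) ^ s) := by
    have : (1 : ℝ) - lam / K = ((K : ℝ) - lam) / K := by
      field_simp
    rw [this, div_pow, two_mul, pow_add, pow_add]
  have hsum : ∑ ks : Fin s → Fin K, quadV Q (F ks)
      = (1 / 2) * ∑ ks : Fin s → Fin K, (F ks ⬝ᵥ Q *ᵥ F ks) := by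
    rw [Finset.mul_sum]
    exact Finset.sum_congr rfl fun i _ => rfl
  rw [ge_iff_le, hsum, hpow]
  unfold quadV
  rw [div_mul_eq_mul_div, div_le_iff₀ (by positivity)]
  have hr : ((K : ℝ) ^ s)⁻¹ * (1 / 2 * ∑ ks : Fin s → Fin K, (F ks ⬝ᵥ Q *ᵥ F ks))
      * ((K : ℝ) ^ s * (K : ℝ) ^ s)
      = (K : ℝ) ^ s * (1 / 2 * ∑ ks : Fin s → Fin K, (F ks ⬝ᵥ Q *ᵥ F ks)) := by
    field_simp
  rw [hr]
  linarith [hJ]
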